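/- Trace saturation from local swap lemmas: suppose an abstract transition system satisfies (i) the ε/O commutation lemma, (ii) the P/ε commutation lemma, and (iii) the adjacent-swap lemma (if κ₁ →_{(t₁,d₁)} κ₂ →_{(t₂,d₂)} κ₃ with d₁, d₂ independent and (t₁ ∈ Σ_P or t₂ ∈ Σ_O), then ∃κ₂', κ₁ →_{(t₂,d₂)} κ₂' →_{(t₁,d₁)} κ₃). Define the trace language Tr as the set of data words w such that there is a run from the initial configuration reading w interleaved with arbitrary ε-steps. Then Tr is saturated: if w₁·(t₁,d₁)·(t₂,d₂)·w₂ ∈ Tr with d₁, d₂ independent and (t₁ ∈ Σ_P or t₂ ∈ Σ_O), then w₁·(t₂,d₂)·(t₁,d₁)·w₂ ∈ Tr. -/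
import Mathlib


/-- `k`-fold iteration of the partial predecessor function. -/
def predIter {D : Type} (pred : D → Option D) : ℕ → D → Option D
  | 0, d => some d
  | n + 1, d => (pred d).bind (predIter pred n)

/-- `d₁` and `d₂` are independent: neither is an iterated predecessor of the other. -/
def Indep {D : Type} (pred : D → Option D) (d₁ d₂ : D) : Prop :=
  ∀ k : ℕ, predIter pred k d₂ ≠ some d₁ ∧ predIter pred k d₁ ≠ some d₂

/-- A data language `L ⊆ (Σ × D)*` is saturated: adjacent letters on independent
data may be swapped, provided the first is a P-letter or the second an O-letter.
`isO t` means `t ∈ Σ_O`; `t ∈ Σ_P` iff `¬ isO t`. -/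
def Saturated {Γ D : Type} (isO : Γ → Prop) (pred : D → Option D)
    (L : Set (List (Γ × D))) : Prop :=
  ∀ (w₁ w₂ : List (Γ × D)) (t₁ t₂ : Γ) (d₁ d₂ : D),
    Indep pred d₁ d₂ → (¬ isO t₁ ∨ isO t₂) →
    w₁ ++ (t₁, d₁) :: (t₂, d₂) :: w₂ ∈ L →
    w₁ ++ (t₂, d₂) :: (t₁, d₁) :: w₂ ∈ L

/-- A run reading the data word `w`, interleaved with arbitrary ε-steps. -/
inductive Trace {K Γ D : Type} (eps : K → K → Prop) (lab : Γ → D → K → K → Prop) :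
    K → List (Γ × D) → K → Prop
  | nil (κ : K) : Trace eps lab κ [] κ
  | eps {κ κ' κ'' : K} {w : List (Γ × D)} :
      eps κ κ' → Trace eps lab κ' w κ'' → Trace eps lab κ w κ''
  | step {κ κ' κ'' : K} {t : Γ} {d : D} {w : List (Γ × D)} :
      lab t d κ κ' → Trace eps lab κ' w κ'' → Trace eps lab κ ((t, d) :: w) κ''


open Relation

lemma trace_of_rtg {K Γ D : Type} {eps : K → K → Prop} {lab : Γ → D → K → K → Prop}
    {κ κ' κ'' : K} {w : List (Γ × D)} (h : Relation.ReflTransGen eps κ κ')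
    (ht : Trace eps lab κ' w κ'') : Trace eps lab κ w κ'' := by
  induction h using Relation.ReflTransGen.head_induction_on with
  | refl => exact ht
  | head h _ ih => exact Trace.eps h ih

lemma trace_cons_extract {K Γ D : Type} {eps : K → K → Prop} {lab : Γ → D → K → K → Prop}
    {κ κ'' : K} {t : Γ} {d : D} {w : List (Γ × D)}
    (h : Trace eps lab κ ((t, d) :: w) κ'') :
    ∃ κa κb, Relation.ReflTransGen eps κ κa ∧ lab t d κa κb ∧ Trace eps lab κb w κ'' := by
  generalize hw : ((t, d) :: w) = w' at h
  induction h with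
  | nil => simp at hw
  | eps he _ ih =>
    obtain ⟨κa, κb, h1, h2, h3⟩ := ih hw
    exact ⟨κa, κb, Relation.ReflTransGen.head he h1, h2, h3⟩
  | step hl ht _ =>
    cases hw
    exact ⟨_, _, Relation.ReflTransGen.refl, hl, ht⟩

lemma eo_rtg {K Γ D : Type} {isO : Γ → Prop} {eps : K → K → Prop}
    {lab : Γ → D → K → K → Prop}
    (hEO : ∀ (t : Γ) (d : D) (κ₁ κ₂ κ₃ : K), isO t → eps κ₁ κ₂ → lab t d κ₂ κ₃ →
      ∃ κ₂', lab t d κ₁ κ₂' ∧ eps κ₂' κ₃)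
    {t : Γ} {d : D} (hO : isO t) {κ κa κb : K}
    (h : Relation.ReflTransGen eps κ κa) (hl : lab t d κa κb) :
    ∃ κx, lab t d κ κx ∧ Relation.ReflTransGen eps κx κb := by
  induction h using Relation.ReflTransGen.head_induction_on with
  | refl => exact ⟨κb, hl, Relation.ReflTransGen.refl⟩
  | head he _ ih =>
    obtain ⟨κx, h1, h2⟩ := ih
    obtain ⟨κy, h3, h4⟩ := hEO _ _ _ _ _ hO he h1
    exact ⟨κy, h3, Relation.ReflTransGen.head h4 h2⟩

lemma pe_rtg {K Γ D : Type} {isO : Γ → Prop} {eps : K → K → Prop}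
    {lab : Γ → D → K → K → Prop}
    (hPE : ∀ (t : Γ) (d : D) (κ₁ κ₂ κ₃ : K), ¬ isO t → lab t d κ₁ κ₂ → eps κ₂ κ₃ →
      ∃ κ₂', eps κ₁ κ₂' ∧ lab t d κ₂' κ₃)
    {t : Γ} {d : D} (hP : ¬ isO t) {κ κ' κa : K}
    (hl : lab t d κ κ') (h : Relation.ReflTransGen eps κ' κa) :
    ∃ κz, Relation.ReflTransGen eps κ κz ∧ lab t d κz κa := by
  induction h with
  | refl => exact ⟨κ, Relation.ReflTransGen.refl, hl⟩
  | tail _ he ih =>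
    obtain ⟨κz, h1, h2⟩ := ih
    obtain ⟨κw, h3, h4⟩ := hPE _ _ _ _ _ hP h2 he
    exact ⟨κw, Relation.ReflTransGen.tail h1 h3, h4⟩

/-- trace saturation from the three local swap lemmas:
(i) ε/O commutation, (ii) P/ε commutation, (iii) the adjacent-swap lemma for
independent data.  The trace language of words readable from the initial
configuration is saturated. -/
theorem trace_saturated {K Γ D : Type} (isO : Γ → Prop) (pred : D → Option D)
    (eps : K → K → Prop) (lab : Γ → D → K → K → Prop) (init : K)
    (hEO : ∀ (t : Γ) (d : D) (κ₁ κ₂ κ₃ : K), isO t → eps κ₁ κ₂ → lab t d κ₂ κ₃ →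
      ∃ κ₂', lab t d κ₁ κ₂' ∧ eps κ₂' κ₃)
    (hPE : ∀ (t : Γ) (d : D) (κ₁ κ₂ κ₃ : K), ¬ isO t → lab t d κ₁ κ₂ → eps κ₂ κ₃ →
      ∃ κ₂', eps κ₁ κ₂' ∧ lab t d κ₂' κ₃)
    (hswap : ∀ (t₁ t₂ : Γ) (d₁ d₂ : D) (κ₁ κ₂ κ₃ : K), Indep pred d₁ d₂ →
      (¬ isO t₁ ∨ isO t₂) → lab t₁ d₁ κ₁ κ₂ → lab t₂ d₂ κ₂ κ₃ →
      ∃ κ₂', lab t₂ d₂ κ₁ κ₂' ∧ lab t₁ d₁ κ₂' κ₃) :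
    Saturated isO pred {w | ∃ κ', Trace eps lab init w κ'} := by
  intro w₁ w₂ t₁ t₂ d₁ d₂ hind hside hmem
  obtain ⟨κ', htr⟩ := hmem
  -- generalize over starting configuration
  suffices h : ∀ (κ : K) (w₁ : List (Γ × D)),
      Trace eps lab κ (w₁ ++ (t₁, d₁) :: (t₂, d₂) :: w₂) κ' →
      Trace eps lab κ (w₁ ++ (t₂, d₂) :: (t₁, d₁) :: w₂) κ' by
    exact ⟨κ', h init w₁ htr⟩
  intro κ w₁ htr
  induction w₁ generalizing κ with
  | cons x w₁ ih =>
    obtain ⟨x1, x2⟩ := x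
    obtain ⟨κa, κb, h1, h2, h3⟩ := trace_cons_extract htr
    exact trace_of_rtg h1 (Trace.step h2 (ih _ h3))
  | nil =>
    simp only [List.nil_append] at htr ⊢
    obtain ⟨κa, κb, h1, h2, h3⟩ := trace_cons_extract htr
    obtain ⟨κc, κd, h4, h5, h6⟩ := trace_cons_extract h3
    rcases hside with hP | hO
    · -- push t₁ right through eps*
      obtain ⟨κz, h7, h8⟩ := pe_rtg hPE hP h2 h4
      obtain ⟨κy, h9, h10⟩ := hswap _ _ _ _ _ _ _ hind (Or.inl hP) h8 h5
      exact trace_of_rtg h1 (trace_of_rtg h7 (Trace.step h9 (Trace.step h10 h6)))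
    · -- push t₂ left through eps*
      obtain ⟨κx, h7, h8⟩ := eo_rtg hEO hO h4 h5
      obtain ⟨κy, h9, h10⟩ := hswap _ _ _ _ _ _ _ hind (Or.inr hO) h2 h7
      exact trace_of_rtg h1 (Trace.step h9 (Trace.step h10 (trace_of_rtg h8 h6)))
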